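/- Let φ: A → B be an étale homomorphism of commutative Noetherian rings, and let I ⊆ A be an ideal such that every associated prime of the A-module A/I is a minimal prime over I. Assume moreover that every minimal prime over I is the contraction φ^{−1}(q) of some prime q of B containing IB (i.e. every generic point of V(I) lies in the image of Spec(B/IB) → Spec A). Then I equals the kernel of the composite ring homomorphism A → B → B/IB; equivalently, the induced map A/I → B/IB is injective. -/

import Mathlib

/-!
STATEMENT 6: Let `φ : A → B` be an étale homomorphism of commutative Noetherian rings
(étale = flat, unramified and of finite presentation; we encode `φ` as the structure map
of an `A`-algebra `B`), and `I ⊆ A` an ideal such that every associated prime of `A/I` is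
a minimal prime over `I`.  Assume every minimal prime over `I` is the contraction of a
prime of `B` containing `IB`.  Then `I` is the kernel of the composite `A → B → B/IB`;
i.e. the induced map `A/I → B/IB` is injective.
-/

theorem scheme_theoretic_image_of_etale_preimage
    (A B : Type*) [CommRing A] [CommRing B] [IsNoetherianRing A] [IsNoetherianRing B]
    [Algebra A B] [Module.Flat A B] [Algebra.FormallyUnramified A B]
    [Algebra.FinitePresentation A B]
    (I : Ideal A)
    (hI : ∀ p ∈ associatedPrimes A (A ⧸ I), p ∈ I.minimalPrimes)
    (hdom : ∀ p ∈ I.minimalPrimes, ∃ q : Ideal B, q.IsPrime ∧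
      I.map (algebraMap A B) ≤ q ∧ q.comap (algebraMap A B) = p) :
    RingHom.ker ((Ideal.Quotient.mk (I.map (algebraMap A B))).comp (algebraMap A B)) = I := by
  set J := RingHom.ker ((Ideal.Quotient.mk (I.map (algebraMap A B))).comp (algebraMap A B))
    with hJ
  have hJmem : ∀ a : A, a ∈ J ↔ algebraMap A B a ∈ I.map (algebraMap A B) := by
    intro a
    rw [hJ, RingHom.mem_ker, RingHom.comp_apply, Ideal.Quotient.eq_zero_iff_mem]
  refine le_antisymm ?_ (fun a ha => (hJmem a).mpr (Ideal.mem_map_of_mem _ ha))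
  -- J ≤ I
  intro a₀ ha₀
  by_contra ha₀I
  -- the image of J in A ⧸ I
  set N : Submodule A (A ⧸ I) := Submodule.map I.mkQ (J : Submodule A A) with hN
  have hx₀ : (Submodule.Quotient.mk a₀ : A ⧸ I) ∈ N := ⟨a₀, ha₀, rfl⟩
  have hxne : (⟨Submodule.Quotient.mk a₀, hx₀⟩ : N) ≠ 0 := by
    intro h
    exact ha₀I ((Submodule.Quotient.mk_eq_zero I).mp (congrArg Subtype.val h))
  obtain ⟨P, hP, -⟩ :=
    exists_le_isAssociatedPrime_of_isNoetherianRing A (M := N) _ hxne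
  obtain ⟨hPprime, y, hy⟩ := isAssociatedPrime_iff.mp hP
  obtain ⟨a, haJ, hay⟩ := y.2
  -- P = (I : a)
  have hPa : ∀ c : A, c ∈ P ↔ c * a ∈ I := by
    intro c
    rw [hy, Submodule.mem_colon_singleton, Submodule.mem_bot]
    constructor
    · intro h
      have h2 : c • (y : A ⧸ I) = 0 := by
        rw [← Submodule.coe_smul, h, Submodule.coe_zero]
      rw [← hay] at h2
      rw [← Submodule.Quotient.mk_eq_zero I]
      simpa [Submodule.Quotient.mk_smul, smul_eq_mul, Algebra.smul_def, Ideal.Quotient.algebraMap_eq] using h2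
    · intro h
      ext
      rw [Submodule.coe_smul, ← hay, Submodule.coe_zero]
      show c • (Submodule.Quotient.mk a : A ⧸ I) = 0
      rw [← Submodule.Quotient.mk_smul, Submodule.Quotient.mk_eq_zero]
      simpa [smul_eq_mul] using h
  -- P is an associated prime of A ⧸ I, hence a minimal prime of I
  have hPassoc : P ∈ associatedPrimes A (A ⧸ I) :=
    IsAssociatedPrime.map_of_injective (f := N.subtype) (isAssociatedPrime_iff.mpr ⟨hPprime, y, hy⟩)
      Subtype.val_injective
  obtain ⟨q, hq, hIq, hqP⟩ := hdom P (hI P hPassoc)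
  -- localize B at q
  set C := Localization.AtPrime q with hC
  haveI : Module.Flat A C := Module.Flat.trans A B C
  -- the injective map A⧸P → A⧸I given by multiplication by a
  have hle : (P : Submodule A A) ≤ Submodule.comap
      (LinearMap.toSpanSingleton A A a) (I : Submodule A A) := by
    intro c hc
    simpa [LinearMap.toSpanSingleton_apply, smul_eq_mul] using (hPa c).mp hc
  set f : (A ⧸ P) →ₗ[A] (A ⧸ I) :=
    Submodule.mapQ (P : Submodule A A) (I : Submodule A A)
      (LinearMap.toSpanSingleton A A a) hle with hf
  have hfinj : Function.Injective f := by
    intro x y h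
    obtain ⟨c, rfl⟩ := Submodule.mkQ_surjective _ x
    obtain ⟨d, rfl⟩ := Submodule.mkQ_surjective _ y
    have h' : (c - d) • a ∈ (I : Submodule A A) := by
      rw [hf] at h
      simp only [Submodule.mkQ_apply, Submodule.mapQ_apply,
        LinearMap.toSpanSingleton_apply] at h
      simpa [sub_smul, sub_mul, smul_eq_mul] using (Submodule.Quotient.eq (I : Submodule A A)).mp h
    exact (Submodule.Quotient.eq (P : Submodule A A)).mpr
      ((hPa (c - d)).mpr (by simpa [smul_eq_mul] using h'))
  -- tensor with C
  have htinj : Function.Injective (LinearMap.lTensor C f) :=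
    Module.Flat.lTensor_preserves_injective_linearMap f hfinj
  -- the image of `1 ⊗ mk P 1` is zero
  have hmapP : P.map (algebraMap A C) ≤ q.map (algebraMap B C) := by
    rw [IsScalarTower.algebraMap_eq A B C, ← Ideal.map_map]
    refine Ideal.map_mono ?_
    rw [Ideal.map_le_iff_le_comap, hqP]
  have himg : LinearMap.lTensor C f ((1 : C) ⊗ₜ[A] (Ideal.Quotient.mk P 1)) = 0 := by
    have h1 : f (Ideal.Quotient.mk P 1) = Ideal.Quotient.mk I a := by
      show f (Submodule.Quotient.mk 1) = _
      rw [hf, Submodule.mapQ_apply, LinearMap.toSpanSingleton_apply, one_smul]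
      rfl
    rw [LinearMap.lTensor_tmul, h1]
    rw [← (TensorProduct.tensorQuotEquivQuotSMul C I).map_eq_zero_iff]
    rw [TensorProduct.tensorQuotEquivQuotSMul_tmul_mk, Submodule.Quotient.mk_eq_zero,
      Ideal.smul_top_eq_map, Submodule.restrictScalars_mem]
    have : algebraMap A C a ∈ I.map (algebraMap A C) := by
      rw [IsScalarTower.algebraMap_eq A B C, ← Ideal.map_map, RingHom.comp_apply]
      exact Ideal.mem_map_of_mem _ ((hJmem a).mp haJ)
    simpa [Algebra.smul_def] using this
  -- conclude `1 ∈ P·C`, contradiction with `P·C ≤ q·C` maximal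
  have hz : (1 : C) ⊗ₜ[A] (Ideal.Quotient.mk P 1) = 0 := by
    apply htinj
    rw [himg, map_zero]
  have h1mem : (1 : C) ∈ P.map (algebraMap A C) := by
    rw [← (TensorProduct.tensorQuotEquivQuotSMul C P).map_eq_zero_iff] at hz
    rw [TensorProduct.tensorQuotEquivQuotSMul_tmul_mk, Submodule.Quotient.mk_eq_zero,
      Ideal.smul_top_eq_map, Submodule.restrictScalars_mem] at hz
    simpa using hz
  have : (1 : C) ∈ IsLocalRing.maximalIdeal C := by
    rw [← Localization.AtPrime.map_eq_maximalIdeal]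
    exact hmapP h1mem
  exact (IsLocalRing.maximalIdeal.isMaximal C).ne_top (Ideal.eq_top_iff_one _ |>.mpr this)
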